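/- Every pie of size k in an EPT representation is a multipie of size k. -/

import Mathlib

/-- A maximal clique (a maximal complete vertex set) of a simple graph. -/
def IsMaxClique {V : Type} (G : SimpleGraph V) (s : Set V) : Prop :=
  G.IsClique s ∧ ∀ t : Set V, G.IsClique t → s ⊆ t → s = t

/-- The number of maximal cliques of a graph. -/
noncomputable def numMaxCliques {V : Type} (G : SimpleGraph V) : ℕ :=
  {s : Set V | IsMaxClique G s}.ncard

/-- The graph obtained from `G` and a chordless path on `l` new vertices by joining the
first vertex of the path to every vertex of `A` and the last vertex to every vertex of `B`. -/
def joinPath {V : Type} (G : SimpleGraph V) (A B : Set V) (l : ℕ) :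
    SimpleGraph (V ⊕ Fin l) where
  Adj x y :=
    match x, y with
    | Sum.inl a, Sum.inl b => G.Adj a b
    | Sum.inl a, Sum.inr i => (i.val = 0 ∧ a ∈ A) ∨ (i.val = l - 1 ∧ a ∈ B)
    | Sum.inr i, Sum.inl a => (i.val = 0 ∧ a ∈ A) ∨ (i.val = l - 1 ∧ a ∈ B)
    | Sum.inr i, Sum.inr j => i.val + 1 = j.val ∨ j.val + 1 = i.val
  symm := by
    constructor
    rintro (a | i) (b | j) h <;> simp_all <;> tauto
  loopless := by
    constructor
    rintro (a | i) h
    · exact G.irrefl h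
    · rcases h with h | h <;> omega

/-- Gates, defined recursively (up to isomorphism): chordless cycles `Cₙ`, `n ≥ 4`, are
gates, and joining a new chordless path to two disjoint maximal cliques of a gate
yields a gate. -/
inductive IsGate : {V : Type} → SimpleGraph V → Prop
  | cycle (n : ℕ) (hn : 4 ≤ n) : IsGate (SimpleGraph.cycleGraph n)
  | extend {V : Type} (G : SimpleGraph V) (C C' : Set V) (l : ℕ)
      (hG : IsGate G) (hC : IsMaxClique G C) (hC' : IsMaxClique G C')
      (hdisj : Disjoint C C') (hl : 2 ≤ l) : IsGate (joinPath G C C' l)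
  | iso {V W : Type} (G : SimpleGraph V) (H : SimpleGraph W)
      (hG : IsGate G) (e : G ≃g H) : IsGate H

/-- An EPT representation of `G`: a family of paths in a host tree such that two distinct
vertices are adjacent iff their paths share an edge of the tree. -/
structure EPTRep {V : Type} (G : SimpleGraph V) where
  VT : Type
  T : SimpleGraph VT
  tree : T.IsTree
  src : V → VT
  tgt : V → VT
  walk : (v : V) → T.Walk (src v) (tgt v)
  isPath : ∀ v, (walk v).IsPath
  adj_iff : ∀ v w : V, v ≠ w →
    (G.Adj v w ↔ ∃ e : Sym2 VT, e ∈ (walk v).edges ∧ e ∈ (walk w).edges)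

/-- The edge set of the path representing `v`. -/
def EPTRep.edges {V : Type} {G : SimpleGraph V} (R : EPTRep G) (v : V) :
    Set (Sym2 R.VT) := {e | e ∈ (R.walk v).edges}

/-- The representation is Helly: every nonempty pairwise edge-intersecting subfamily of
paths has a common edge. -/
def EPTRep.Helly {V : Type} {G : SimpleGraph V} (R : EPTRep G) : Prop :=
  ∀ S : Set V, S.Nonempty →
    (∀ u ∈ S, ∀ v ∈ S, (R.edges u ∩ R.edges v).Nonempty) →
    (⋂ v ∈ S, R.edges v).Nonempty

/-- The host tree has maximum degree at most `h`. -/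
def EPTRep.maxDegLE {V : Type} {G : SimpleGraph V} (R : EPTRep G) (h : ℕ) : Prop :=
  ∀ x : R.VT, (R.T.neighborSet x).ncard ≤ h

/-- The class `[h,2,2]`. -/
def InEPTClass (h : ℕ) {V : Type} (G : SimpleGraph V) : Prop :=
  ∃ R : EPTRep G, R.maxDegLE h

/-- Helly EPT graphs. -/
def IsHellyEPT {V : Type} (G : SimpleGraph V) : Prop :=
  ∃ R : EPTRep G, R.Helly

/-- The class Helly `[h,2,2]`. -/
def InHellyClass (h : ℕ) {V : Type} (G : SimpleGraph V) : Prop :=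
  ∃ R : EPTRep G, R.Helly ∧ R.maxDegLE h

/-- Three paths of the representation form a claw at some claw of the host tree. -/
def EPTRep.FormsClaw {V : Type} {G : SimpleGraph V} (R : EPTRep G) (a b c : V) : Prop :=
  ∃ q x y z : R.VT, R.T.Adj q x ∧ R.T.Adj q y ∧ R.T.Adj q z ∧
    x ≠ y ∧ y ≠ z ∧ x ≠ z ∧
    s(q, x) ∈ R.edges a ∧ s(q, y) ∈ R.edges a ∧
    s(q, y) ∈ R.edges b ∧ s(q, z) ∈ R.edges b ∧
    s(q, x) ∈ R.edges c ∧ s(q, z) ∈ R.edges c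

/-- A multipie of size `k` whose paths are those representing the vertices in `S`. -/
def IsMultipie {V : Type} {G : SimpleGraph V} (R : EPTRep G) (k : ℕ) (S : Set V) : Prop :=
  ∃ (q : R.VT) (qi : Fin k → R.VT), Function.Injective qi ∧
    (∀ i, R.T.Adj q (qi i)) ∧
    (∀ v ∈ S, {i : Fin k | qi i ∈ (R.walk v).support}.ncard = 2) ∧
    (∀ u ∈ S, ∀ v ∈ S, ∀ i j : Fin k, i ≠ j →
      qi i ∈ (R.walk u).support → qi j ∈ (R.walk u).support →
      qi i ∈ (R.walk v).support → qi j ∈ (R.walk v).support → u = v) ∧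
    (∀ i, 2 ≤ {v ∈ S | s(q, qi i) ∈ R.edges v}.ncard) ∧
    (∀ a ∈ S, ∀ b ∈ S, ∀ c ∈ S, ¬ R.FormsClaw a b c)

/-- The next index around a cycle. -/
def finNext {k : ℕ} (hk : 0 < k) (i : Fin k) : Fin k :=
  ⟨(i.val + 1) % k, Nat.mod_lt _ hk⟩

/-- `G` has a clique separator: a complete vertex set whose removal disconnects the graph. -/
def HasCliqueSep {V : Type} (G : SimpleGraph V) : Prop :=
  ∃ C : Set V, G.IsClique C ∧ ¬ (G.induce Cᶜ).Preconnected

/-- An atom of `G`: a maximal vertex subset inducing a connected subgraph without clique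
separators. -/
def IsAtomOf {V : Type} (G : SimpleGraph V) (A : Set V) : Prop :=
  (G.induce A).Connected ∧ ¬ HasCliqueSep (G.induce A) ∧
    ∀ B : Set V, A ⊆ B → (G.induce B).Connected → ¬ HasCliqueSep (G.induce B) → A = B


section EPTHelpers

open SimpleGraph

variable {VT : Type} {T : SimpleGraph VT}

lemma end_edge_unique {c b y z : VT} (p : T.Walk c b) (hp : p.IsPath)
    (hy : s(c, y) ∈ p.edges) (hz : s(c, z) ∈ p.edges) : y = z := by
  cases p with
  | nil => simp at hy
  | cons h q =>
    rw [Walk.cons_isPath_iff] at hp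
    rw [Walk.edges_cons, List.mem_cons] at hy hz
    rcases hy with hy | hy
    · rcases hz with hz | hz
      · rw [Sym2.congr_right] at hy hz; rw [hy, hz]
      · exact (hp.2 (Walk.fst_mem_support_of_mem_edges q hz)).elim
    · exact (hp.2 (Walk.fst_mem_support_of_mem_edges q hy)).elim

lemma not_three_edges {a b q x y z : VT} (p : T.Walk a b) (hp : p.IsPath)
    (hxy : x ≠ y) (hyz : y ≠ z) (hxz : x ≠ z)
    (hx : s(q, x) ∈ p.edges) (hy : s(q, y) ∈ p.edges) (hz : s(q, z) ∈ p.edges) : False := by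
  classical
  have hq : q ∈ p.support := Walk.fst_mem_support_of_mem_edges p hx
  have hp1 : (p.takeUntil q hq).reverse.IsPath := (hp.takeUntil hq).reverse
  have hp2 : (p.dropUntil q hq).IsPath := hp.dropUntil hq
  have key : ∀ w, s(q, w) ∈ p.edges →
      (s(q,w) ∈ (p.takeUntil q hq).reverse.edges ∨ s(q,w) ∈ (p.dropUntil q hq).edges) := by
    intro w hw
    rw [← Walk.take_spec p hq, Walk.edges_append, List.mem_append] at hw
    rcases hw with h | h
    · left; rw [Walk.edges_reverse, List.mem_reverse]; exact h
    · right; exact h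
  rcases key x hx with hx' | hx' <;> rcases key y hy with hy' | hy' <;>
      rcases key z hz with hz' | hz'
  · exact hxy (end_edge_unique _ hp1 hx' hy')
  · exact hxy (end_edge_unique _ hp1 hx' hy')
  · exact hxz (end_edge_unique _ hp1 hx' hz')
  · exact hyz (end_edge_unique _ hp2 hy' hz')
  · exact hyz (end_edge_unique _ hp1 hy' hz')
  · exact hxz (end_edge_unique _ hp2 hx' hz')
  · exact hxy (end_edge_unique _ hp2 hx' hy')
  · exact hxy (end_edge_unique _ hp2 hx' hy')

lemma exists_subwalk {a b u v : VT} (p : T.Walk a b) (hp : p.IsPath)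
    (hu : u ∈ p.support) (hv : v ∈ p.support) :
    ∃ w : T.Walk u v, w.IsPath ∧ ∀ e ∈ w.edges, e ∈ p.edges := by
  classical
  by_cases h : u ∈ (p.takeUntil v hv).support
  · exact ⟨(p.takeUntil v hv).dropUntil u h, (hp.takeUntil hv).dropUntil h,
      fun e he => p.edges_takeUntil_subset hv ((p.takeUntil v hv).edges_dropUntil_subset h he)⟩
  · have h2 : u ∈ (p.dropUntil v hv).support := by
      rw [← Walk.take_spec p hv, Walk.support_append, List.mem_append] at hu
      rcases hu with h' | h'
      · exact absurd h' h
      · exact List.mem_of_mem_tail h'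
    exact ⟨((p.dropUntil v hv).takeUntil u h2).reverse, ((hp.dropUntil hv).takeUntil h2).reverse,
      fun e he => by
        rw [Walk.edges_reverse, List.mem_reverse] at he
        exact p.edges_dropUntil_subset hv ((p.dropUntil v hv).edges_takeUntil_subset h2 he)⟩

lemma edge_of_adj_mem {a b u v : VT} (hT : T.IsTree) (p : T.Walk a b) (hp : p.IsPath)
    (hu : u ∈ p.support) (hv : v ∈ p.support) (huv : T.Adj u v) :
    s(u, v) ∈ p.edges := by
  obtain ⟨w, hw, hsub⟩ := exists_subwalk p hp hu hv
  have hcons : (Walk.cons huv Walk.nil : T.Walk u v).IsPath := by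
    simp [Walk.cons_isPath_iff, huv.ne]
  have heq : w = Walk.cons huv Walk.nil := (hT.existsUnique_path u v).unique hw hcons
  apply hsub
  rw [heq]
  simp

lemma finNext_ne {k : ℕ} (hk2 : 2 ≤ k) (hk : 0 < k) (i : Fin k) : finNext hk i ≠ i := by
  intro h
  have h2 : (i.val + 1) % k = i.val := congrArg Fin.val h
  have hi := i.isLt
  rcases Nat.lt_or_ge (i.val + 1) k with h3 | h3
  · rw [Nat.mod_eq_of_lt h3] at h2; omega
  · have h4 : i.val + 1 = k := by omega
    rw [h4, Nat.mod_self] at h2; omega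

lemma finNext_inj {k : ℕ} (hk : 0 < k) {a b : Fin k}
    (h : finNext hk a = finNext hk b) : a = b := by
  have h2 : (a.val + 1) % k = (b.val + 1) % k := congrArg Fin.val h
  have ha := a.isLt; have hb := b.isLt
  apply Fin.ext
  rcases Nat.lt_or_ge (a.val + 1) k with h3 | h3 <;>
    rcases Nat.lt_or_ge (b.val + 1) k with h4 | h4
  · rw [Nat.mod_eq_of_lt h3, Nat.mod_eq_of_lt h4] at h2; omega
  · have e : b.val + 1 = k := by omega
    rw [Nat.mod_eq_of_lt h3, e, Nat.mod_self] at h2; omega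
  · have e : a.val + 1 = k := by omega
    rw [Nat.mod_eq_of_lt h4, e, Nat.mod_self] at h2; omega
  · omega

lemma finNext_not_invol {k : ℕ} (hk4 : 4 ≤ k) (hk : 0 < k) {a b : Fin k}
    (h1 : a = finNext hk b) (h2 : b = finNext hk a) : False := by
  have e1 : a.val = (b.val + 1) % k := congrArg Fin.val h1
  have e2 : b.val = (a.val + 1) % k := congrArg Fin.val h2
  have ha := a.isLt; have hb := b.isLt
  rcases Nat.lt_or_ge (b.val + 1) k with h3 | h3 <;>
    rcases Nat.lt_or_ge (a.val + 1) k with h4 | h4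
  · rw [Nat.mod_eq_of_lt h3] at e1; rw [Nat.mod_eq_of_lt h4] at e2; omega
  · rw [Nat.mod_eq_of_lt h3] at e1
    have : a.val + 1 = k := by omega
    rw [this, Nat.mod_self] at e2; omega
  · rw [Nat.mod_eq_of_lt h4] at e2
    have : b.val + 1 = k := by omega
    rw [this, Nat.mod_self] at e1; omega
  · have h5 : a.val + 1 = k := by omega
    have h6 : b.val + 1 = k := by omega
    rw [h6, Nat.mod_self] at e1
    rw [h5, Nat.mod_self] at e2
    omega

/-- The previous index around a cycle. -/
def finPrev {k : ℕ} (hk : 0 < k) (i : Fin k) : Fin k :=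
  ⟨(i.val + (k - 1)) % k, Nat.mod_lt _ hk⟩

lemma finNext_finPrev {k : ℕ} (hk : 0 < k) (i : Fin k) : finNext hk (finPrev hk i) = i := by
  apply Fin.ext
  show ((i.val + (k - 1)) % k + 1) % k = i.val
  have hi := i.isLt
  by_cases h : i.val = 0
  · rw [h]
    have e1 : (0 + (k - 1)) % k = k - 1 := by
      rw [Nat.mod_eq_of_lt (by omega : 0 + (k-1) < k)]; omega
    rw [e1]
    have e2 : k - 1 + 1 = k := by omega
    rw [e2, Nat.mod_self]
  · have h1 : (i.val + (k - 1)) % k = i.val - 1 := by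
      have h0 : i.val + (k - 1) = k + (i.val - 1) := by omega
      rw [h0, Nat.add_mod_left]
      exact Nat.mod_eq_of_lt (by omega)
    rw [h1]
    have h2 : i.val - 1 + 1 = i.val := by omega
    rw [h2, Nat.mod_eq_of_lt hi]

lemma fin_sub_val_one {k : ℕ} {u v : Fin k} (h : (u - v).val = 1) :
    u.val = v.val + 1 ∨ u.val + k = v.val + 1 := by
  rw [Fin.sub_def] at h
  simp only at h
  rw [Nat.add_comm] at h
  have hu := u.isLt; have hv := v.isLt
  rcases Nat.lt_or_ge (u.val + (k - v.val)) k with h3 | h3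
  · rw [Nat.mod_eq_of_lt h3] at h; omega
  · have h4 : u.val + (k - v.val) = k + (u.val - v.val) := by omega
    rw [h4, Nat.add_mod_left, Nat.mod_eq_of_lt (by omega)] at h
    omega

lemma cycle_triangle_free {k : ℕ} (hk4 : 4 ≤ k) {a b c : Fin k}
    (hab : (SimpleGraph.cycleGraph k).Adj a b) (hbc : (SimpleGraph.cycleGraph k).Adj b c)
    (hac : (SimpleGraph.cycleGraph k).Adj a c) : False := by
  have na : a.val ≠ b.val := fun h => hab.ne (Fin.ext h)
  have nb : b.val ≠ c.val := fun h => hbc.ne (Fin.ext h)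
  have nc : a.val ≠ c.val := fun h => hac.ne (Fin.ext h)
  rw [cycleGraph_adj'] at hab hbc hac
  have ha := a.isLt; have hb := b.isLt; have hc := c.isLt
  rcases hab with h | h <;> rcases hbc with h' | h' <;> rcases hac with h'' | h'' <;>
    rcases fin_sub_val_one h with h | h <;> rcases fin_sub_val_one h' with h' | h' <;>
    rcases fin_sub_val_one h'' with h'' | h'' <;> omega

end EPTHelpers

theorem stmt19 {V : Type} (G : SimpleGraph V) (R : EPTRep G) (k : ℕ) (hk : 4 ≤ k)
    (f : SimpleGraph.cycleGraph k ↪g G) (q : R.VT) (qi : Fin k → R.VT)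
    (hinj : Function.Injective qi) (hadj : ∀ i, R.T.Adj q (qi i))
    (hpie : ∀ i : Fin k, qi i ∈ (R.walk (f i)).support ∧ q ∈ (R.walk (f i)).support ∧
      qi (finNext (by omega) i) ∈ (R.walk (f i)).support) :
    IsMultipie R k (Set.range ⇑f) := by
  classical
  have hT := R.tree
  have hk0 : 0 < k := by omega
  have hk2 : 2 ≤ k := by omega
  have hedge : ∀ i : Fin k, s(q, qi i) ∈ (R.walk (f i)).edges := fun i =>
    edge_of_adj_mem hT _ (R.isPath _) (hpie i).2.1 (hpie i).1 (hadj i)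
  have hedge' : ∀ i : Fin k, s(q, qi (finNext hk0 i)) ∈ (R.walk (f i)).edges := fun i =>
    edge_of_adj_mem hT _ (R.isPath _) (hpie i).2.1 (hpie i).2.2 (hadj _)
  have hsupp_eq : ∀ j : Fin k,
      {i : Fin k | qi i ∈ (R.walk (f j)).support} = {j, finNext hk0 j} := by
    intro j
    ext i
    simp only [Set.mem_setOf_eq, Set.mem_insert_iff, Set.mem_singleton_iff]
    constructor
    · intro hi
      by_contra hcon
      push_neg at hcon
      obtain ⟨hij, hinj'⟩ := hcon
      have e1 : s(q, qi i) ∈ (R.walk (f j)).edges :=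
        edge_of_adj_mem hT _ (R.isPath _) (hpie j).2.1 hi (hadj i)
      exact not_three_edges _ (R.isPath (f j))
        (fun h => hij (hinj h))
        (fun h => (finNext_ne hk2 hk0 j) (hinj h).symm)
        (fun h => hinj' (hinj h))
        e1 (hedge j) (hedge' j)
    · rintro (rfl | rfl)
      · exact (hpie _).1
      · exact (hpie j).2.2
  refine ⟨q, qi, hinj, hadj, ?_, ?_, ?_, ?_⟩
  · rintro v ⟨j, rfl⟩
    rw [hsupp_eq j, Set.ncard_pair (Ne.symm (finNext_ne hk2 hk0 j))]
  · rintro u ⟨a, rfl⟩ v ⟨b, rfl⟩ i j hij hiu hju hiv hjv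
    have hia : i ∈ ({a, finNext hk0 a} : Set (Fin k)) := by rw [← hsupp_eq a]; exact hiu
    have hja : j ∈ ({a, finNext hk0 a} : Set (Fin k)) := by rw [← hsupp_eq a]; exact hju
    have hib : i ∈ ({b, finNext hk0 b} : Set (Fin k)) := by rw [← hsupp_eq b]; exact hiv
    have hjb : j ∈ ({b, finNext hk0 b} : Set (Fin k)) := by rw [← hsupp_eq b]; exact hjv
    simp only [Set.mem_insert_iff, Set.mem_singleton_iff] at hia hja hib hjb
    have hab : a = b := by
      rcases hia with h1 | h1 <;> rcases hja with h2 | h2 <;>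
        rcases hib with h3 | h3 <;> rcases hjb with h4 | h4 <;>
        first
          | exact absurd (h1.trans h2.symm) hij
          | exact absurd (h3.trans h4.symm) hij
          | exact h1.symm.trans h3
          | exact h2.symm.trans h4
          | exact finNext_inj hk0 (h1.symm.trans h3)
          | exact finNext_inj hk0 (h2.symm.trans h4)
          | exact (finNext_not_invol hk hk0 (h1.symm.trans h3) (h4.symm.trans h2)).elim
          | exact (finNext_not_invol hk hk0 (h2.symm.trans h4) (h3.symm.trans h1)).elim
    rw [hab]
  · intro i
    have hfin : ({v ∈ Set.range ⇑f | s(q, qi i) ∈ R.edges v}).Finite :=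
      (Set.finite_range ⇑f).subset (Set.sep_subset _ _)
    have hprev : s(q, qi i) ∈ (R.walk (f (finPrev hk0 i))).edges := by
      have h := hedge' (finPrev hk0 i)
      rw [finNext_finPrev] at h
      exact h
    have hne : f i ≠ f (finPrev hk0 i) := by
      intro h
      have h1 : i = finPrev hk0 i := f.injective h
      have h2 := finNext_finPrev hk0 i
      rw [← h1] at h2
      exact finNext_ne hk2 hk0 i h2
    exact (Set.one_lt_ncard_iff hfin).mpr
      ⟨f i, f (finPrev hk0 i), ⟨⟨i, rfl⟩, hedge i⟩, ⟨⟨finPrev hk0 i, rfl⟩, hprev⟩, hne⟩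
  · rintro a ⟨ia, rfl⟩ b ⟨ib, rfl⟩ c ⟨ic, rfl⟩ hclaw
    obtain ⟨q', x, y, z, hqx, hqy, hqz, hxy, hyz, hxz, hax, hay, hby, hbz, hcx, hcz⟩ := hclaw
    have hab : f ia ≠ f ib := by
      intro h
      rw [← h] at hbz
      exact not_three_edges _ (R.isPath (f ia)) hxy hyz hxz hax hay hbz
    have hac : f ia ≠ f ic := by
      intro h
      rw [← h] at hcz
      exact not_three_edges _ (R.isPath (f ia)) hxy hyz hxz hax hay hcz
    have hbc : f ib ≠ f ic := by
      intro h
      rw [← h] at hcx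
      exact not_three_edges _ (R.isPath (f ib)) hxy hyz hxz hcx hby hbz
    have adjab : G.Adj (f ia) (f ib) := (R.adj_iff _ _ hab).mpr ⟨s(q', y), hay, hby⟩
    have adjbc : G.Adj (f ib) (f ic) := (R.adj_iff _ _ hbc).mpr ⟨s(q', z), hbz, hcz⟩
    have adjac : G.Adj (f ia) (f ic) := (R.adj_iff _ _ hac).mpr ⟨s(q', x), hax, hcx⟩
    rw [f.map_adj_iff] at adjab adjbc adjac
    exact cycle_triangle_free hk adjab adjbc adjac
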